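/- Let n ≥ 1 and M ≥ 1 be integers, let P be a nonempty finite subset of {0,1}^n ⊆ ℝ^n, let V ∈ ℝ^n lie in the convex hull of P over ℝ, and let W ∈ (ZMod M)^n lie in the affine span over ZMod M of the image of P under the coordinatewise reduction map {0,1}^n → (ZMod M)^n. Then for every ε > 0 there exists L₀ such that for every natural number L ≥ L₀ with (L : ZMod M) = 1, there exists x : Fin L → ℝ^n with x(i) ∈ P for every i, satisfying both |(1/L)·Σ_i x(i)_j − V_j| ≤ ε for every coordinate j, and Σ_i x(i) ≡ W coordinatewise modulo M (i.e., the reduction of the integer vector Σ_i x(i) modulo M equals W). -/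

import Mathlib

set_option maxHeartbeats 1000000


open Finset in
lemma aux_affine_weights {n M : ℕ} [NeZero M] (P : Finset (Fin n → ℝ))
    (W : Fin n → ZMod M)
    (hW : W ∈ affineSpan (ZMod M)
        ((fun p : Fin n → ℝ => fun j : Fin n => if p j = 1 then (1 : ZMod M) else 0) ''
          (P : Set (Fin n → ℝ)))) :
    ∃ t : (Fin n → ℝ) → ℕ,
      (∑ p ∈ P, ((t p : ZMod M))) = 1 ∧
      (∑ p ∈ P, (t p : ZMod M) • (fun j : Fin n => if p j = 1 then (1 : ZMod M) else 0)) = W := by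
  classical
  refine affineSpan_induction (p := fun W => ∃ t : (Fin n → ℝ) → ℕ,
      (∑ p ∈ P, ((t p : ZMod M))) = 1 ∧
      (∑ p ∈ P, (t p : ZMod M) • (fun j : Fin n => if p j = 1 then (1 : ZMod M) else 0)) = W)
      hW ?_ ?_
  · intro x hx
    obtain ⟨p₀, hp₀', rfl⟩ := hx
    have hp₀ : p₀ ∈ P := hp₀'
    refine ⟨fun p => if p = p₀ then 1 else 0, ?_, ?_⟩
    · simp [Finset.sum_ite_eq', hp₀]
    · simp [Finset.sum_ite_eq', hp₀]
  · intro c u v w hu hv hw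
    obtain ⟨tu, htu1, htu2⟩ := hu
    obtain ⟨tv, htv1, htv2⟩ := hv
    obtain ⟨tw, htw1, htw2⟩ := hw
    set a : ℕ := c.val with ha
    have haM : a ≤ M := le_of_lt (ZMod.val_lt c)
    have hac : (a : ZMod M) = c := ZMod.natCast_zmod_val c
    have hbc : ((M - a : ℕ) : ZMod M) = -c := by
      rw [Nat.cast_sub haM, ZMod.natCast_self, hac, zero_sub]
    refine ⟨fun p => a * tu p + (M - a) * tv p + tw p, ?_, ?_⟩
    · have h1 : ∀ p : Fin n → ℝ, ((a * tu p + (M - a) * tv p + tw p : ℕ) : ZMod M)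
          = c * (tu p : ZMod M) + (-c) * (tv p : ZMod M) + (tw p : ZMod M) := by
        intro p
        rw [Nat.cast_add, Nat.cast_add, Nat.cast_mul, Nat.cast_mul, hac, hbc]
      rw [Finset.sum_congr rfl fun p _ => h1 p]
      rw [Finset.sum_add_distrib, Finset.sum_add_distrib, ← Finset.mul_sum, ← Finset.mul_sum,
        htu1, htv1, htw1]
      ring
    · have : ∀ p : Fin n → ℝ,
        ((a * tu p + (M - a) * tv p + tw p : ℕ) : ZMod M) •
          (fun j : Fin n => if p j = 1 then (1 : ZMod M) else 0)
          = c • ((tu p : ZMod M) • fun j : Fin n => if p j = 1 then (1 : ZMod M) else 0)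
            + (-c) • ((tv p : ZMod M) • fun j : Fin n => if p j = 1 then (1 : ZMod M) else 0)
            + ((tw p : ZMod M) • fun j : Fin n => if p j = 1 then (1 : ZMod M) else 0) := by
        intro p
        rw [Nat.cast_add, Nat.cast_add, Nat.cast_mul, Nat.cast_mul, hac, hbc]
        module
      rw [Finset.sum_congr rfl fun p _ => this p]
      rw [Finset.sum_add_distrib, Finset.sum_add_distrib, ← Finset.smul_sum, ← Finset.smul_sum,
        htu2, htv2, htw2]
      simp only [vsub_eq_sub, vadd_eq_add]
      module

lemma aux_round {α : Type*} [DecidableEq α] (P : Finset α) (hP : P.Nonempty)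
    (w : α → ℝ) (hw0 : ∀ p ∈ P, 0 ≤ w p) (hw1 : ∑ p ∈ P, w p = 1) (m : ℕ) :
    ∃ r : α → ℕ, (∑ p ∈ P, r p = m) ∧ ∀ p ∈ P, |(r p : ℝ) - m * w p| ≤ P.card := by
  classical
  obtain ⟨p₀, hp₀⟩ := hP
  have hcard : (1 : ℝ) ≤ P.card := by
    exact_mod_cast Finset.card_pos.mpr ⟨p₀, hp₀⟩
  set S : ℕ := ∑ q ∈ P.erase p₀, ⌊(m : ℝ) * w q⌋₊ with hS
  have hflo : ∀ q ∈ P, (⌊(m : ℝ) * w q⌋₊ : ℝ) ≤ m * w q := fun q hq =>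
    Nat.floor_le (mul_nonneg (Nat.cast_nonneg m) (hw0 q hq))
  have hsum_erase : ∑ q ∈ P.erase p₀, w q = 1 - w p₀ := by
    rw [← Finset.add_sum_erase P w hp₀] at hw1; linarith
  have hSle : (S : ℝ) ≤ m * (1 - w p₀) := by
    rw [hS]
    push_cast
    calc ∑ q ∈ P.erase p₀, (⌊(m : ℝ) * w q⌋₊ : ℝ)
        ≤ ∑ q ∈ P.erase p₀, (m : ℝ) * w q :=
          Finset.sum_le_sum fun q hq => hflo q (Finset.mem_of_mem_erase hq)
      _ = m * (1 - w p₀) := by rw [← Finset.mul_sum, hsum_erase]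
  have hwp₀ : 0 ≤ w p₀ := hw0 p₀ hp₀
  have hSm : S ≤ m := by
    have : (S : ℝ) ≤ m := le_trans hSle (by nlinarith)
    exact_mod_cast this
  refine ⟨fun p => if p = p₀ then m - S else ⌊(m : ℝ) * w p⌋₊, ?_, ?_⟩
  · rw [← Finset.add_sum_erase _ _ hp₀]
    simp only [eq_self_iff_true, if_true]
    rw [Finset.sum_congr rfl (fun q hq => if_neg (Finset.ne_of_mem_erase hq))]
    rw [← hS]
    omega
  · intro p hp
    by_cases hpe : p = p₀
    · subst hpe
      simp only [eq_self_iff_true, if_true]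
      have hsub : ((m - S : ℕ) : ℝ) = (m : ℝ) - S := Nat.cast_sub hSm
      rw [hsub, abs_le]
      constructor
      · -- m - S - m * w p ≥ -card  :  since S ≤ m (1 - w p)
        nlinarith [hSle]
      · -- m - S - m w p = ∑_{erase} (m w q - floor) ≤ card - 1
        have h1 : (m : ℝ) - S - m * w p = ∑ q ∈ P.erase p, ((m : ℝ) * w q - ⌊(m : ℝ) * w q⌋₊) := by
          rw [Finset.sum_sub_distrib, ← Finset.mul_sum, hsum_erase, hS]
          push_cast
          ring
        have h2 : ∑ q ∈ P.erase p, ((m : ℝ) * w q - ⌊(m : ℝ) * w q⌋₊)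
            ≤ ∑ q ∈ P.erase p, (1 : ℝ) := by
          refine Finset.sum_le_sum fun q hq => ?_
          have := Nat.lt_floor_add_one ((m : ℝ) * w q)
          linarith
        simp only [Finset.sum_const, nsmul_eq_mul, mul_one] at h2
        have h3 : ((P.erase p).card : ℝ) ≤ P.card := by
          exact_mod_cast Finset.card_le_card (Finset.erase_subset _ _)
        linarith
    · simp only [if_neg hpe]
      rw [abs_le]
      have := Nat.lt_floor_add_one ((m : ℝ) * w p)
      have := hflo p hp
      constructor <;> linarith

lemma aux_points {α : Type*} (P : Finset α) (c : α → ℕ) (L : ℕ)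
    (hL : ∑ p ∈ P, c p = L) :
    ∃ x : Fin L → α, (∀ i, x i ∈ P) ∧
      ∀ {β : Type} [AddCommMonoid β] (f : α → β), ∑ i, f (x i) = ∑ p ∈ P, c p • f p := by
  classical
  set l : List α := P.toList.flatMap (fun p => List.replicate (c p) p) with hl
  have hlen : l.length = L := by
    rw [hl, List.length_flatMap, ← hL]
    rw [show (fun a => (List.replicate (c a) a).length) = c by
      funext p; simp]
    exact Finset.sum_map_toList P c
  refine ⟨fun i => l.get (Fin.cast hlen.symm i), ?_, ?_⟩
  · intro i
    show l.get (Fin.cast hlen.symm i) ∈ P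
    have hmem : l.get (Fin.cast hlen.symm i) ∈ l := List.get_mem l _
    obtain ⟨p, hp, hq⟩ := List.mem_flatMap.mp hmem
    rw [List.eq_of_mem_replicate hq]
    exact (Finset.mem_toList).mp hp
  · intro β _ f
    have h1 : ∑ i : Fin L, f (l.get (Fin.cast hlen.symm i))
        = ∑ i : Fin l.length, f (l.get i) := by
      refine (Fintype.sum_equiv (finCongr hlen) _ _ fun i => ?_).symm
      rfl
    rw [h1]
    have h2 : ∑ i : Fin l.length, f (l.get i) = (l.map f).sum := by
      simpa using Fin.sum_univ_get' l f
    rw [h2, hl, List.map_flatMap]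
    rw [List.flatMap, List.sum_flatten, List.map_map]
    rw [show ((List.sum ∘ fun p => (List.replicate (c p) p).map f) : α → β)
        = fun p => c p • f p by funext p; simp [List.sum_replicate]]
    exact Finset.sum_map_toList P _

/-- Simultaneous approximation (core of the threshold-periodic algorithm): if
`V` lies in the real convex hull of a nonempty finite set `P` of `0/1`-vectors
and `W` lies in the affine span over `ZMod M` of the coordinatewise reduction of
`P`, then for every `ε > 0` and all sufficiently large `L ≡ 1 (mod M)` there are
`L` points of `P` whose average is within `ε` of `V` in every coordinate and
whose coordinatewise integer sums reduce to `W` modulo `M`. -/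
theorem simultaneous_convex_and_affine_approx
    (n M : ℕ) (hn : 1 ≤ n) (hM : 1 ≤ M)
    (P : Finset (Fin n → ℝ)) (hP : P.Nonempty)
    (hP01 : ∀ p ∈ P, ∀ j, p j = 0 ∨ p j = 1)
    (V : Fin n → ℝ) (hV : V ∈ convexHull ℝ (P : Set (Fin n → ℝ)))
    (W : Fin n → ZMod M)
    (hW : W ∈ affineSpan (ZMod M)
        ((fun p : Fin n → ℝ => fun j : Fin n => if p j = 1 then (1 : ZMod M) else 0) ''
          (P : Set (Fin n → ℝ)))) :
    ∀ ε : ℝ, 0 < ε → ∃ L₀ : ℕ, ∀ L : ℕ, L₀ ≤ L → (L : ZMod M) = 1 →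
      ∃ x : Fin L → (Fin n → ℝ), (∀ i, x i ∈ P) ∧
        (∀ j, |(1 / (L : ℝ)) * ∑ i, x i j - V j| ≤ ε) ∧
        (∀ j, (((Finset.univ.filter fun i : Fin L => x i j = 1).card : ZMod M)) = W j) := by
  classical
  intro ε hε
  haveI : NeZero M := ⟨by omega⟩
  obtain ⟨w, hw0, hw1, hwV⟩ := Finset.mem_convexHull'.mp hV
  obtain ⟨t, ht1, ht2⟩ := aux_affine_weights P W hW
  set A : ℕ := ∑ p ∈ P, t p with hA
  set N : ℕ := P.card with hN
  set C : ℝ := 2 * A + M * N with hC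
  have hC0 : 0 ≤ C := by positivity
  refine ⟨A + 1 + ⌈(N * C) / ε⌉₊, fun L hL hLM => ?_⟩
  have hLA : A ≤ L := by omega
  have hL1 : 1 ≤ L := by omega
  have hLpos : (0 : ℝ) < L := by exact_mod_cast hL1
  -- divisibility
  have hAcast : (A : ZMod M) = 1 := by rw [hA]; push_cast; exact ht1
  have hzero : ((L - A : ℕ) : ZMod M) = 0 := by
    rw [Nat.cast_sub hLA, hLM, hAcast, sub_self]
  have hdvd : M ∣ (L - A) := (ZMod.natCast_eq_zero_iff _ _).mp hzero
  set m : ℕ := (L - A) / M with hm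
  have hMm : M * m = L - A := Nat.mul_div_cancel' hdvd
  obtain ⟨r, hr1, hr2⟩ := aux_round P hP w hw0 hw1 m
  set c : (Fin n → ℝ) → ℕ := fun p => t p + M * r p with hc
  have hcL : ∑ p ∈ P, c p = L := by
    rw [hc, Finset.sum_add_distrib, ← Finset.mul_sum, hr1, hMm, ← hA]
    omega
  obtain ⟨x, hxP, hxsum⟩ := aux_points P c L hcL
  -- key real bound on counts
  have hkey : ∀ p ∈ P, |(c p : ℝ) - L * w p| ≤ C := by
    intro p hp
    have htp : t p ≤ A := Finset.single_le_sum (fun q _ => Nat.zero_le (t q)) hp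
    have hwple : w p ≤ 1 := by
      rw [← hw1]
      exact Finset.single_le_sum hw0 hp
    have hwp0 : 0 ≤ w p := hw0 p hp
    have hMmR : (M : ℝ) * m = (L : ℝ) - A := by
      have := congrArg (Nat.cast : ℕ → ℝ) hMm
      push_cast [Nat.cast_sub hLA] at this
      exact_mod_cast this
    have hrp := hr2 p hp
    have htpR : (t p : ℝ) ≤ A := by exact_mod_cast htp
    have heq : (c p : ℝ) - L * w p
        = (t p : ℝ) + M * ((r p : ℝ) - m * w p) - A * w p := by
      rw [hc]
      push_cast
      nlinarith [hMmR]
    rw [heq, hC]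
    have habs := abs_sub_abs_le_abs_sub ((r p : ℝ)) 0
    have h1 : |(M : ℝ) * ((r p : ℝ) - m * w p)| ≤ M * N := by
      rw [abs_mul, abs_of_nonneg (by positivity : (0:ℝ) ≤ (M:ℝ))]
      exact mul_le_mul_of_nonneg_left hrp (by positivity)
    have h2 : |(t p : ℝ)| ≤ A := by
      rw [abs_of_nonneg (by positivity)]; exact htpR
    have h3 : |(A : ℝ) * w p| ≤ A := by
      rw [abs_of_nonneg (by positivity)]
      nlinarith [Nat.cast_nonneg (α := ℝ) A]
    calc |(t p : ℝ) + M * ((r p : ℝ) - m * w p) - A * w p|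
        ≤ |(t p : ℝ)| + |(M : ℝ) * ((r p : ℝ) - m * w p)| + |(A : ℝ) * w p| := by
          exact (abs_sub _ _).trans (by gcongr; exact abs_add_le _ _)
      _ ≤ A + M * N + A := by linarith
      _ = 2 * A + M * N := by ring
  -- ε bound on N*C/L
  have hNCL : (N : ℝ) * C / L ≤ ε := by
    rw [div_le_iff₀ hLpos]
    have h1 : (N : ℝ) * C / ε ≤ (⌈(N * C) / ε⌉₊ : ℝ) := Nat.le_ceil _
    have h2 : ((⌈(N * C) / ε⌉₊ : ℕ) : ℝ) ≤ L := by
      have : ⌈(N * C) / ε⌉₊ ≤ L := by omega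
      exact_mod_cast this
    have := (div_le_iff₀ hε).mp (le_trans h1 h2)
    linarith
  refine ⟨x, hxP, ?_, ?_⟩
  · -- convex approximation
    intro j
    have hVj : V j = ∑ p ∈ P, w p * p j := by
      rw [← hwV, Finset.sum_apply]
      simp [Pi.smul_apply, smul_eq_mul]
    have hSj : ∑ i, x i j = ∑ p ∈ P, (c p : ℝ) * p j := by
      have := hxsum (fun p => p j)
      simpa [nsmul_eq_mul] using this
    rw [hSj, hVj]
    have heq : (1 / (L : ℝ)) * ∑ p ∈ P, (c p : ℝ) * p j - ∑ p ∈ P, w p * p j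
        = ∑ p ∈ P, ((c p / L - w p) * p j) := by
      rw [Finset.mul_sum, ← Finset.sum_sub_distrib]
      refine Finset.sum_congr rfl fun p _ => ?_
      field_simp
    rw [heq]
    calc |∑ p ∈ P, ((c p / L - w p) * p j)|
        ≤ ∑ p ∈ P, |(c p / L - w p) * p j| := Finset.abs_sum_le_sum_abs _ _
      _ ≤ ∑ p ∈ P, C / L := by
          refine Finset.sum_le_sum fun p hp => ?_
          rw [abs_mul]
          have hpj : |p j| ≤ 1 := by
            rcases hP01 p hp j with h | h <;> rw [h] <;> norm_num
          have hcw : |(c p : ℝ) / L - w p| ≤ C / L := by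
            have h := hkey p hp
            have heq2 : (c p : ℝ) / L - w p = ((c p : ℝ) - L * w p) / L := by
              field_simp
            rw [heq2, abs_div, abs_of_pos hLpos]
            gcongr
          have := mul_le_mul hcw hpj (abs_nonneg _) (div_nonneg hC0 (le_of_lt hLpos))
          linarith
      _ = N * C / L := by
          rw [Finset.sum_const, hN, nsmul_eq_mul]
          ring
      _ ≤ ε := hNCL
  · -- congruence condition
    intro j
    have hcard : (Finset.univ.filter fun i : Fin L => x i j = 1).card
        = ∑ p ∈ P, c p * (if p j = 1 then 1 else 0) := by
      rw [Finset.card_filter]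
      have := hxsum (fun p => if p j = 1 then (1 : ℕ) else 0)
      simpa [smul_eq_mul] using this
    have h2j : ∑ p ∈ P, (t p : ZMod M) * (if p j = 1 then (1 : ZMod M) else 0) = W j := by
      have := congrFun ht2 j
      simpa [Finset.sum_apply, Pi.smul_apply, smul_eq_mul] using this
    rw [hcard]
    push_cast
    rw [← h2j]
    refine Finset.sum_congr rfl fun p _ => ?_
    rw [hc]
    push_cast [ZMod.natCast_self]
    ring
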